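/- Let m ≥ 2 and k ≥ 0 be integers and suppose κ = 1. Assume that for every i ∈ J_{η_1} the sequence (μ({x^1_{i,k+j+1}}))_{j∈ℤ₊} is a polynomial in j of degree at most m−2, and that for at least one i ∈ J_{η_1} this sequence is a polynomial in j of degree exactly m−2. Then the composition operator C on L²(μ) is a strict k-quasi-m-isometry: C is k-quasi-m-isometric, but C is not k-quasi-n-isometric for any integer n with 1 ≤ n < m. -/

import Mathlib

open MeasureTheory Finset

noncomputable section

/-- A real sequence indexed by the nonnegative integers is a polynomial in `n` of degree
at most `d` if some real polynomial of degree at most `d` interpolates it. -/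
def IsPolySeq (d : ℕ) (γ : ℕ → ℝ) : Prop :=
  ∃ q : Polynomial ℝ, q.natDegree ≤ d ∧ ∀ n : ℕ, q.eval (n : ℝ) = γ n

/-- A real sequence is a polynomial in `n` of degree exactly `d`. -/
def IsPolySeqExact (d : ℕ) (γ : ℕ → ℝ) : Prop :=
  ∃ q : Polynomial ℝ, q.degree = (d : WithBot ℕ) ∧ ∀ n : ℕ, q.eval (n : ℝ) = γ n

/-- `B_m(T) = ∑_{j=0}^m (-1)^j C(m,j) T*^{m-j} T^{m-j}`. -/
def BmOp {H : Type*} [NormedAddCommGroup H] [InnerProductSpace ℂ H] [CompleteSpace H]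
    (m : ℕ) (T : H →L[ℂ] H) : H →L[ℂ] H :=
  ∑ j ∈ Finset.range (m + 1), ((-1 : ℂ) ^ j * (m.choose j : ℂ)) •
    ((ContinuousLinearMap.adjoint T) ^ (m - j) * T ^ (m - j))

/-- `T` is a `k`-quasi-`m`-isometry, i.e. `T*^k B_m(T) T^k = 0`. -/
def IsQuasiIso {H : Type*} [NormedAddCommGroup H] [InnerProductSpace ℂ H] [CompleteSpace H]
    (k m : ℕ) (T : H →L[ℂ] H) : Prop :=
  (ContinuousLinearMap.adjoint T) ^ k * BmOp m T * T ^ k = 0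

/-- The Radon–Nikodym derivative `h_p` of `μ ∘ φ^{-p}` with respect to `μ` in the discrete
setting: `h_p(x) = μ(φ^{-p}({x}))/μ({x})`. -/
def hRN {X : Type*} [MeasurableSpace X] (μ : Measure X) (φ : X → X) (p : ℕ) (x : X) : ℝ :=
  (μ ((φ^[p]) ⁻¹' {x})).toReal / (μ {x}).toReal

open Polynomial
open scoped InnerProductSpace

local notation "Δ" => fwdDiff (1:ℕ)

lemma fwdDiff_iter_zero_fun (n : ℕ) (y : ℕ) :
    Δ^[n] (fun _ : ℕ => (0:ℝ)) y = 0 := by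
  induction n generalizing y with
  | zero => simp
  | succ n ih =>
      rw [Function.iterate_succ_apply]
      have : Δ (fun _ : ℕ => (0:ℝ)) = fun _ : ℕ => (0:ℝ) := by
        funext t; simp [fwdDiff]
      rw [this]; exact ih y

lemma fwdDiff_iter_shift (γ : ℕ → ℝ) (s : ℕ) (n : ℕ) (y : ℕ) :
    Δ^[n] (fun t => γ (t + s)) y = Δ^[n] γ (y + s) := by
  rw [fwdDiff_iter_eq_sum_shift, fwdDiff_iter_eq_sum_shift]
  refine Finset.sum_congr rfl fun t ht => ?_
  congr 1
  ring

lemma taylor_sub_coeff (q : ℝ[X]) (n : ℕ) (hn : q.natDegree ≤ n) :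
    ((Polynomial.taylor 1 q) - q).coeff n = 0 := by
  rw [Polynomial.coeff_sub, Polynomial.taylor_coeff]
  have h : Polynomial.hasseDeriv n q = Polynomial.C (q.coeff n) := by
    ext i
    rw [Polynomial.hasseDeriv_coeff, Polynomial.coeff_C]
    rcases Nat.eq_zero_or_pos i with hi | hi
    · subst hi; simp
    · have h2 : q.natDegree < i + n := by omega
      rw [Polynomial.coeff_eq_zero_of_natDegree_lt h2]
      simp [Nat.pos_iff_ne_zero.mp hi]
  rw [h, Polynomial.eval_C, sub_self]

lemma natDegree_taylor_sub (q : ℝ[X]) (d : ℕ) (hd : q.natDegree ≤ d + 1) :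
    ((Polynomial.taylor 1 q) - q).natDegree ≤ d := by
  refine Polynomial.natDegree_le_iff_coeff_eq_zero.mpr fun n hn => ?_
  exact taylor_sub_coeff q n (by omega)

lemma fwdDiff_eval_poly (q : ℝ[X]) :
    Δ (fun j : ℕ => q.eval (j:ℝ)) =
      fun j : ℕ => ((Polynomial.taylor 1 q) - q).eval (j:ℝ) := by
  funext j
  simp only [fwdDiff, Polynomial.eval_sub, Polynomial.taylor_apply, Polynomial.eval_comp,
    Polynomial.eval_add, Polynomial.eval_X, Polynomial.eval_C]
  push_cast
  ring_nf

-- P1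
lemma fwdDiff_iter_poly_zero (d : ℕ) : ∀ q : ℝ[X], q.natDegree ≤ d → ∀ y : ℕ,
    Δ^[d+1] (fun j : ℕ => q.eval (j:ℝ)) y = 0 := by
  induction d with
  | zero =>
      intro q hq y
      rw [Polynomial.eq_C_of_natDegree_le_zero hq]
      simp [fwdDiff]
  | succ d ih =>
      intro q hq y
      rw [Function.iterate_succ_apply, fwdDiff_eval_poly]
      exact ih _ (natDegree_taylor_sub q d hq) y

/-- Newton interpolation polynomial from the first `n` forward differences at 0. -/
noncomputable def newtonPoly (γ : ℕ → ℝ) (n : ℕ) : ℝ[X] :=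
  ∑ t ∈ range n, Polynomial.C (Δ^[t] γ 0 / t.factorial) * descPochhammer ℝ t

lemma natDegree_newtonPoly (γ : ℕ → ℝ) (n : ℕ) :
    (newtonPoly γ n).natDegree ≤ n - 1 := by
  refine Polynomial.natDegree_sum_le_of_forall_le _ _ fun t ht => ?_
  refine le_trans (Polynomial.natDegree_mul_le) ?_
  rw [Polynomial.natDegree_C, descPochhammer_natDegree]
  simp only [zero_add]
  exact Nat.le_sub_one_of_lt (mem_range.mp ht)

lemma fwdDiff_iter_eq_zero_of_le (γ : ℕ → ℝ) (n : ℕ) (h : ∀ y, Δ^[n] γ y = 0)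
    {t : ℕ} (ht : n ≤ t) (y : ℕ) : Δ^[t] γ y = 0 := by
  obtain ⟨u, rfl⟩ := Nat.exists_eq_add_of_le ht
  rw [Nat.add_comm, Function.iterate_add_apply]
  have : Δ^[n] γ = fun _ : ℕ => (0:ℝ) := funext h
  rw [this]
  exact fwdDiff_iter_zero_fun u y

lemma eval_newtonPoly (γ : ℕ → ℝ) (n : ℕ) (h : ∀ y, Δ^[n] γ y = 0) (j : ℕ) :
    (newtonPoly γ n).eval (j:ℝ) = γ j := by
  have hγ : γ j = ∑ t ∈ range (j+1), (j.choose t : ℝ) * Δ^[t] γ 0 := by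
    have := shift_eq_sum_fwdDiff_iter (1:ℕ) γ j 0
    simp only [smul_eq_mul, mul_one, zero_add, nsmul_eq_mul] at this
    simpa using this
  have hev : (newtonPoly γ n).eval (j:ℝ)
      = ∑ t ∈ range n, (j.choose t : ℝ) * Δ^[t] γ 0 := by
    rw [newtonPoly, Polynomial.eval_finset_sum]
    refine Finset.sum_congr rfl fun t ht => ?_
    rw [Polynomial.eval_mul, Polynomial.eval_C,
      descPochhammer_eval_eq_descFactorial ℝ j t,
      Nat.descFactorial_eq_factorial_mul_choose]
    have : (t.factorial : ℝ) ≠ 0 := by positivity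
    push_cast
    field_simp
  rw [hev, hγ]
  set R := n + (j + 1) with hR
  have e1 : ∑ t ∈ range n, (j.choose t : ℝ) * Δ^[t] γ 0
      = ∑ t ∈ range R, (j.choose t : ℝ) * Δ^[t] γ 0 := by
    refine Finset.sum_subset (Finset.range_subset_range.mpr (by omega : n ≤ R)) fun t ht hnt => ?_
    have hnt' : n ≤ t := by simpa [mem_range, not_lt] using hnt
    rw [fwdDiff_iter_eq_zero_of_le γ n h hnt' 0, mul_zero]
  have e2 : ∑ t ∈ range (j+1), (j.choose t : ℝ) * Δ^[t] γ 0
      = ∑ t ∈ range R, (j.choose t : ℝ) * Δ^[t] γ 0 := by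
    refine Finset.sum_subset (Finset.range_subset_range.mpr (by omega : j + 1 ≤ R)) fun t ht hnt => ?_
    have hjt : j < t := by simpa [mem_range, not_lt] using hnt
    rw [Nat.choose_eq_zero_of_lt hjt]
    simp
  rw [e1, e2]

lemma coeff_newtonPoly (γ : ℕ → ℝ) (d : ℕ) :
    (newtonPoly γ (d+1)).coeff d = Δ^[d] γ 0 / d.factorial := by
  rw [newtonPoly, Polynomial.finset_sum_coeff, Finset.sum_range_succ]
  have h1 : ∀ t ∈ range d,
      (Polynomial.C (Δ^[t] γ 0 / t.factorial) * descPochhammer ℝ t).coeff d = 0 := by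
    intro t ht
    refine Polynomial.coeff_eq_zero_of_natDegree_lt ?_
    refine lt_of_le_of_lt (Polynomial.natDegree_mul_le) ?_
    rw [Polynomial.natDegree_C, descPochhammer_natDegree]
    simpa using mem_range.mp ht
  rw [Finset.sum_eq_zero h1, zero_add]
  have h2 : (descPochhammer ℝ d).coeff d = 1 := by
    have hm := monic_descPochhammer ℝ d
    have hd := descPochhammer_natDegree ℝ d
    rw [Polynomial.Monic, Polynomial.leadingCoeff, hd] at hm
    exact hm
  rw [Polynomial.coeff_C_mul, h2, mul_one]

lemma poly_eq_of_eval_nat {p q : ℝ[X]} (h : ∀ j : ℕ, p.eval (j:ℝ) = q.eval (j:ℝ)) :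
    p = q := by
  refine Polynomial.eq_of_infinite_eval_eq p q ?_
  have hsub : Set.range (Nat.cast : ℕ → ℝ) ⊆ {x | p.eval x = q.eval x} := by
    rintro x ⟨j, rfl⟩; exact h j
  exact Set.Infinite.mono hsub (Set.infinite_range_of_injective Nat.cast_injective)

lemma const_of_fwdDiff_zero {g : ℕ → ℝ} (h : ∀ y, Δ g y = 0) (y : ℕ) : g y = g 0 := by
  induction y with
  | zero => rfl
  | succ y ih =>
      have := h y
      rw [fwdDiff] at this
      have : g (y + 1) = g y := by linarith
      rw [this, ih]

-- P5: the d-th forward difference of a polynomial sequence of degree ≤ d is constant d! * coeff d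
lemma fwdDiff_iter_poly_coeff (q : ℝ[X]) (d : ℕ) (hd : q.natDegree ≤ d) (γ : ℕ → ℝ)
    (hγ : ∀ j : ℕ, q.eval (j:ℝ) = γ j) (y : ℕ) :
    Δ^[d] γ y = d.factorial * q.coeff d := by
  have hγ' : γ = fun j : ℕ => q.eval (j:ℝ) := by funext j; rw [hγ]
  subst hγ'
  have hz : ∀ y, Δ^[d+1] (fun j : ℕ => q.eval (j:ℝ)) y = 0 := fwdDiff_iter_poly_zero d q hd
  have hconst : Δ^[d] (fun j : ℕ => q.eval (j:ℝ)) y = Δ^[d] (fun j : ℕ => q.eval (j:ℝ)) 0 := by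
    refine const_of_fwdDiff_zero (fun y' => ?_) y
    have h2 := congrFun (Function.iterate_succ_apply' (fwdDiff (1:ℕ)) d
      (fun j : ℕ => q.eval (j:ℝ))) y'
    rw [← h2]
    exact hz y'
  rw [hconst]
  have hqN : q = newtonPoly (fun j : ℕ => q.eval (j:ℝ)) (d+1) :=
    poly_eq_of_eval_nat (fun j => (eval_newtonPoly _ (d+1) hz j).symm)
  have := coeff_newtonPoly (fun j : ℕ => q.eval (j:ℝ)) d
  rw [← hqN] at this
  have hfac : (d.factorial : ℝ) ≠ 0 := by positivity
  field_simp at this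
  linarith [this]

-- P6
lemma coeff_nonneg_of_pos_eval (q : ℝ[X]) (d : ℕ) (hd : q.natDegree ≤ d)
    (hpos : ∀ j : ℕ, 0 < q.eval (j:ℝ)) : 0 ≤ q.coeff d := by
  by_contra hneg
  push_neg at hneg
  have hne : q.coeff d ≠ 0 := ne_of_lt hneg
  have hdeg : q.natDegree = d := le_antisymm hd (Polynomial.le_natDegree_of_ne_zero hne)
  rcases Nat.eq_zero_or_pos d with h0 | hdpos
  · subst h0
    have := Polynomial.eq_C_of_natDegree_le_zero hd
    have h1 := hpos 0
    rw [this] at h1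
    simp only [Polynomial.eval_C] at h1
    rw [this, Polynomial.coeff_C] at hneg
    simp at hneg
    linarith
  · have hq0 : q ≠ 0 := fun h => by simp [h] at hne
    have hdeg' : 0 < q.degree := by
      rw [Polynomial.degree_eq_natDegree hq0]
      exact_mod_cast (by omega : (0:ℕ) < q.natDegree)
    have hlead : q.leadingCoeff ≤ 0 := by
      rw [Polynomial.leadingCoeff, hdeg]; linarith
    have htends := Polynomial.tendsto_atBot_of_leadingCoeff_nonpos q hdeg' hlead
    have hcomp : Filter.Tendsto (fun j : ℕ => q.eval (j:ℝ)) Filter.atTop Filter.atBot :=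
      htends.comp tendsto_natCast_atTop_atTop
    have := (hcomp.eventually_lt_atBot 0).exists
    obtain ⟨j, hj⟩ := this
    exact absurd (hpos j) (not_lt.mpr (le_of_lt hj))

lemma coeff_pos_of_pos_eval (q : ℝ[X]) (d : ℕ) (hd : q.degree = (d : WithBot ℕ))
    (hpos : ∀ j : ℕ, 0 < q.eval (j:ℝ)) : 0 < q.coeff d := by
  have hnd : q.natDegree = d := Polynomial.natDegree_eq_of_degree_eq_some hd
  have hne : q.coeff d ≠ 0 := Polynomial.coeff_ne_zero_of_eq_degree hd
  have := coeff_nonneg_of_pos_eval q d (le_of_eq hnd) hpos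
  exact lt_of_le_of_ne this (Ne.symm hne)

-- reindexing: alternating sum equals forward difference
lemma sum_alt_eq_fwdDiff (g : ℕ → ℝ) (n : ℕ) (y : ℕ) :
    ∑ j ∈ range (n+1), ((-1:ℝ)^j * (n.choose j:ℝ)) * g (y + (n - j)) = Δ^[n] g y := by
  rw [fwdDiff_iter_eq_sum_shift, ← Finset.sum_range_reflect]
  refine Finset.sum_congr rfl fun j hj => ?_
  have hj' : j ≤ n := by simpa [Nat.lt_succ_iff] using hj
  have h1 : n + 1 - 1 - j = n - j := by omega
  have h2 : n - (n - j) = j := by omega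
  rw [h1, h2, Nat.choose_symm hj']
  simp only [smul_eq_mul, mul_one, zsmul_eq_mul]
  push_cast
  ring

section opstuff

variable {H : Type*} [NormedAddCommGroup H] [InnerProductSpace ℂ H] [CompleteSpace H]

lemma adjoint_pow (T : H →L[ℂ] H) (k : ℕ) :
    (ContinuousLinearMap.adjoint T) ^ k = ContinuousLinearMap.adjoint (T ^ k) := by
  rw [← ContinuousLinearMap.star_eq_adjoint, ← ContinuousLinearMap.star_eq_adjoint, star_pow]

lemma inner_quasi (T : H →L[ℂ] H) (k n : ℕ) (f : H) :
    ⟪((ContinuousLinearMap.adjoint T) ^ k * BmOp n T * T ^ k) f, f⟫_ℂ =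
      ((∑ j ∈ range (n+1), ((-1:ℝ)^j * (n.choose j:ℝ)) * ‖(T ^ ((n - j) + k)) f‖^2 : ℝ) : ℂ) := by
  rw [ContinuousLinearMap.mul_apply, ContinuousLinearMap.mul_apply, adjoint_pow,
    ContinuousLinearMap.adjoint_inner_left]
  rw [BmOp, ContinuousLinearMap.sum_apply, sum_inner]
  rw [Complex.ofReal_sum]
  refine Finset.sum_congr rfl fun j hj => ?_
  rw [ContinuousLinearMap.smul_apply, inner_smul_left, ContinuousLinearMap.mul_apply,
    adjoint_pow, ContinuousLinearMap.adjoint_inner_left]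
  have h1 : (T ^ (n - j)) ((T ^ k) f) = (T ^ ((n - j) + k)) f := by
    rw [pow_add, ContinuousLinearMap.mul_apply]
  rw [h1, inner_self_eq_norm_sq_to_K]
  have h2 : (starRingEnd ℂ) ((-1:ℂ) ^ j * (n.choose j : ℂ)) = ((-1:ℝ)^j * (n.choose j:ℝ) : ℝ) := by
    push_cast
    rw [map_mul, map_pow]
    simp
  rw [h2]
  push_cast
  ring_nf
  rfl

lemma isQuasiIso_iff (T : H →L[ℂ] H) (k n : ℕ) :
    IsQuasiIso k n T ↔ ∀ f : H,
      ∑ j ∈ range (n+1), ((-1:ℝ)^j * (n.choose j:ℝ)) * ‖(T ^ ((n - j) + k)) f‖^2 = 0 := by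
  constructor
  · intro h f
    have := inner_quasi T k n f
    rw [IsQuasiIso] at h
    rw [h] at this
    simp only [ContinuousLinearMap.zero_apply, inner_zero_left] at this
    exact_mod_cast this.symm
  · intro h
    rw [IsQuasiIso]
    set A : H →L[ℂ] H := (ContinuousLinearMap.adjoint T) ^ k * BmOp n T * T ^ k with hA
    have key : ∀ f : H, ⟪A f, f⟫_ℂ = 0 := by
      intro f
      rw [hA, inner_quasi T k n f, h f]
      simp
    have h0 : (A : H →ₗ[ℂ] H) = 0 :=
      (inner_map_self_eq_zero (A : H →ₗ[ℂ] H)).mp (fun x => key x)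
    exact ContinuousLinearMap.coe_injective
      (h0.trans (ContinuousLinearMap.coe_zero).symm)

end opstuff

-- L² norm squared as lintegral
lemma lp2_norm_sq {α : Type*} [MeasurableSpace α] {μ : Measure α} (g : Lp ℂ 2 μ) :
    (∫⁻ x, (‖g x‖₊ : ENNReal)^2 ∂μ) ≠ ⊤ ∧
      ‖g‖^2 = (∫⁻ x, (‖g x‖₊ : ENNReal)^2 ∂μ).toReal := by
  have hsn : eLpNorm g 2 μ = (∫⁻ x, (‖g x‖₊ : ENNReal)^2 ∂μ) ^ (1/2 : ℝ) := by
    rw [eLpNorm_eq_lintegral_rpow_enorm_toReal (by norm_num) (by norm_num)]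
    have h2 : ((2:ENNReal)).toReal = (2:ℝ) := by norm_num
    rw [h2]
    congr 1
    refine lintegral_congr fun x => ?_
    rw [← ENNReal.rpow_natCast]
    norm_num
    rfl
  set I := ∫⁻ x, (‖g x‖₊ : ENNReal)^2 ∂μ with hI
  have hne : I ≠ ⊤ := by
    intro htop
    have := Lp.eLpNorm_ne_top g
    rw [hsn, htop] at this
    simp [ENNReal.top_rpow_of_pos (by norm_num : (0:ℝ) < 1/2)] at this
  refine ⟨hne, ?_⟩
  rw [Lp.norm_def, hsn, ← ENNReal.toReal_rpow]
  rw [← Real.rpow_natCast (I.toReal ^ (1/2:ℝ)) 2, ← Real.rpow_mul ENNReal.toReal_nonneg]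
  norm_num

lemma sum_alt_eq_fwdDiff₀ (g : ℕ → ℝ) (n : ℕ) :
    ∑ j ∈ range (n+1), ((-1:ℝ)^j * (n.choose j:ℝ)) * g (n - j) = Δ^[n] g 0 := by
  rw [← sum_alt_eq_fwdDiff g n 0]
  exact Finset.sum_congr rfl fun j hj => by rw [Nat.zero_add]

lemma summable_fwdDiff_iter {ι : Type*} (γ : ι → ℕ → ℝ) (n : ℕ)
    (hs : ∀ t, Summable (fun i => γ i t)) :
    Summable (fun i => Δ^[n] (γ i) 0) := by
  have h : (fun i => Δ^[n] (γ i) 0)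
      = fun i => ∑ t ∈ range (n+1), ((-1:ℝ)^t * (n.choose t:ℝ)) * γ i (n - t) :=
    funext fun i => (sum_alt_eq_fwdDiff₀ (γ i) n).symm
  rw [h]
  exact summable_sum (fun t ht => (hs (n - t)).mul_left _)

lemma fwdDiff_iter_tsum {ι : Type*} (γ : ι → ℕ → ℝ) (n : ℕ)
    (hs : ∀ t, Summable (fun i => γ i t)) :
    Δ^[n] (fun t => ∑' i, γ i t) 0 = ∑' i, Δ^[n] (γ i) 0 := by
  rw [← sum_alt_eq_fwdDiff₀ (fun t => ∑' i, γ i t) n]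
  have h1 : ∀ j ∈ range (n+1),
      ((-1:ℝ)^j * (n.choose j:ℝ)) * (∑' i, γ i (n - j))
        = ∑' i, ((-1:ℝ)^j * (n.choose j:ℝ)) * γ i (n - j) :=
    fun j hj => (tsum_mul_left).symm
  rw [Finset.sum_congr rfl h1,
    ← Summable.tsum_finsetSum (fun j hj => ((hs (n - j)).mul_left _))]
  exact tsum_congr fun i => sum_alt_eq_fwdDiff₀ (γ i) n

lemma funext_of_ae {X : Type*} [MeasurableSpace X] {μ : Measure X}
    (hpos : ∀ x : X, 0 < μ {x}) {f g : X → ℂ} (hfg : f =ᵐ[μ] g) (x : X) : f x = g x := by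
  by_contra hx
  have h0 : μ {y | ¬ f y = g y} = 0 := by
    have := hfg
    rw [Filter.EventuallyEq, MeasureTheory.ae_iff] at this
    exact this
  have hsub : {x} ⊆ {y | ¬ f y = g y} := by
    intro z hz
    rw [Set.mem_singleton_iff] at hz
    subst hz
    exact hx
  have := measure_mono (μ := μ) hsub
  rw [h0] at this
  exact absurd (lt_of_lt_of_le (hpos x) this) (by simp)

theorem stmt9
    (κ : ℕ) (hκ : 1 ≤ κ)
    (Φ₂ : ℤ → ℕ)
    (hΦ₂ : ∀ q : ℤ, (1 ≤ Φ₂ q ∧ Φ₂ q ≤ κ) ∧ (κ : ℤ) ∣ q - (Φ₂ q : ℤ))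
    (X : Type*) [MeasurableSpace X] [Countable X]
    (hmeas : ∀ s : Set X, MeasurableSet s)
    (η : ℕ → ℕ∞)
    (hη : ∃ r : ℕ, 1 ≤ r ∧ r ≤ κ ∧ η r ≠ 0)
    (xc : ℕ → X) (xb : ℕ → ℕ → ℕ → X)
    (hinj₁ : ∀ r r' : ℕ, 1 ≤ r → r ≤ κ → 1 ≤ r' → r' ≤ κ → xc r = xc r' → r = r')
    (hinj₂ : ∀ r r' i j : ℕ, 1 ≤ r → r ≤ κ → 1 ≤ r' → r' ≤ κ → 1 ≤ i → (i : ℕ∞) ≤ η r' →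
      1 ≤ j → xc r ≠ xb r' i j)
    (hinj₃ : ∀ r i j r' i' j' : ℕ, 1 ≤ r → r ≤ κ → 1 ≤ i → (i : ℕ∞) ≤ η r → 1 ≤ j →
      1 ≤ r' → r' ≤ κ → 1 ≤ i' → (i' : ℕ∞) ≤ η r' → 1 ≤ j' →
      xb r i j = xb r' i' j' → r = r' ∧ i = i' ∧ j = j')
    (hsurj : ∀ x : X, (∃ r : ℕ, 1 ≤ r ∧ r ≤ κ ∧ x = xc r) ∨
      ∃ r i j : ℕ, 1 ≤ r ∧ r ≤ κ ∧ 1 ≤ i ∧ (i : ℕ∞) ≤ η r ∧ 1 ≤ j ∧ x = xb r i j)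
    (φ : X → X)
    (hφ₁ : ∀ r i j : ℕ, 1 ≤ r → r ≤ κ → 1 ≤ i → (i : ℕ∞) ≤ η r → 1 ≤ j →
      φ (xb r i (j + 1)) = xb r i j)
    (hφ₂ : ∀ r i : ℕ, 1 ≤ r → r ≤ κ → 1 ≤ i → (i : ℕ∞) ≤ η r → φ (xb r i 1) = xc r)
    (hφ₃ : ∀ r : ℕ, 1 ≤ r → r ≤ κ → φ (xc (Φ₂ ((r : ℤ) + 1))) = xc r)
    (μ : Measure X) [SigmaFinite μ]
    (hμ : ∀ x : X, 0 < μ {x} ∧ μ {x} < ⊤)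
    (C : Lp ℂ 2 μ →L[ℂ] Lp ℂ 2 μ)
    (hC : ∀ f : Lp ℂ 2 μ, (C f : X → ℂ) =ᵐ[μ] fun x => f (φ x))
    (m k : ℕ) (hm : 2 ≤ m) (hκ₁ : κ = 1)
    (hall : ∀ i : ℕ, 1 ≤ i → (i : ℕ∞) ≤ η 1 →
      IsPolySeq (m - 2) (fun j => (μ {xb 1 i (k + j + 1)}).toReal))
    (hex : ∃ i : ℕ, 1 ≤ i ∧ (i : ℕ∞) ≤ η 1 ∧
      IsPolySeqExact (m - 2) (fun j => (μ {xb 1 i (k + j + 1)}).toReal)) :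
    IsQuasiIso k m C ∧ ∀ n : ℕ, 1 ≤ n → n < m → ¬ IsQuasiIso k n C := by
  subst hκ₁
  haveI : MeasurableSingletonClass X := ⟨fun x => hmeas {x}⟩
  have hμpos : ∀ x : X, 0 < μ {x} := fun x => (hμ x).1
  have hμfin : ∀ x : X, μ {x} ≠ ⊤ := fun x => (hμ x).2.ne
  -- basic structure of the graph, with κ = 1
  have hc : φ (xc 1) = xc 1 := by
    obtain ⟨⟨h1, h2⟩, -⟩ := hΦ₂ 2
    have hval : Φ₂ 2 = 1 := le_antisymm h2 h1
    have h3 := hφ₃ 1 le_rfl le_rfl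
    norm_num [hval] at h3
    exact h3
  have hbc : ∀ i ∈ {i : ℕ | 1 ≤ i ∧ (i : ℕ∞) ≤ η 1}, ∀ j : ℕ, 1 ≤ j →
      xc 1 ≠ xb 1 i j := fun i hi j hj =>
    hinj₂ 1 1 i j le_rfl le_rfl le_rfl le_rfl hi.1 hi.2 hj
  have hclass : ∀ x : X, x = xc 1 ∨
      ∃ i j, i ∈ {i : ℕ | 1 ≤ i ∧ (i : ℕ∞) ≤ η 1} ∧ 1 ≤ j ∧ x = xb 1 i j := by
    intro x
    rcases hsurj x with ⟨r, h1, h2, rfl⟩ | ⟨r, i, j, h1, h2, h3, h4, h5, rfl⟩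
    · left; have hr : r = 1 := le_antisymm h2 h1; rw [hr]
    · right
      have hr : r = 1 := le_antisymm h2 h1
      subst hr
      exact ⟨i, j, ⟨h3, h4⟩, h5, rfl⟩
  have hφb : ∀ i ∈ {i : ℕ | 1 ≤ i ∧ (i : ℕ∞) ≤ η 1}, ∀ j : ℕ, 1 ≤ j →
      φ (xb 1 i (j+1)) = xb 1 i j := fun i hi j hj =>
    hφ₁ 1 i j le_rfl le_rfl hi.1 hi.2 hj
  have hφb1 : ∀ i ∈ {i : ℕ | 1 ≤ i ∧ (i : ℕ∞) ≤ η 1}, φ (xb 1 i 1) = xc 1 :=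
    fun i hi => hφ₂ 1 i le_rfl le_rfl hi.1 hi.2
  have hfb : ∀ i ∈ {i : ℕ | 1 ≤ i ∧ (i : ℕ∞) ≤ η 1}, ∀ j : ℕ, 1 ≤ j →
      φ ⁻¹' {xb 1 i j} = {xb 1 i (j+1)} := by
    intro i hi j hj
    ext x
    simp only [Set.mem_preimage, Set.mem_singleton_iff]
    constructor
    · intro hx
      rcases hclass x with rfl | ⟨i', j', hi', hj', rfl⟩
      · rw [hc] at hx; exact absurd hx (hbc i hi j hj)
      · obtain ⟨j'', rfl⟩ : ∃ j'', j' = j'' + 1 := ⟨j' - 1, by omega⟩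
        rcases Nat.eq_zero_or_pos j'' with h0 | h0
        · subst h0
          rw [hφb1 i' hi'] at hx
          exact absurd hx (hbc i hi j hj)
        · rw [hφb i' hi' j'' h0] at hx
          obtain ⟨-, hii, hjj⟩ := hinj₃ 1 i' j'' 1 i j le_rfl le_rfl hi'.1 hi'.2 h0
            le_rfl le_rfl hi.1 hi.2 hj hx
          rw [hii, hjj]
    · intro hx; rw [hx]; exact hφb i hi j hj
  have hfbp : ∀ p : ℕ, ∀ i ∈ {i : ℕ | 1 ≤ i ∧ (i : ℕ∞) ≤ η 1}, ∀ j : ℕ, 1 ≤ j →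
      (φ^[p]) ⁻¹' {xb 1 i j} = {xb 1 i (j+p)} := by
    intro p
    induction p with
    | zero => intro i hi j hj; simp
    | succ p ih =>
        intro i hi j hj
        rw [Function.iterate_succ, Set.preimage_comp, ih i hi j hj,
          hfb i hi (j+p) (by omega), add_assoc]
  have hup : ∀ p : ℕ, ∀ i ∈ {i : ℕ | 1 ≤ i ∧ (i : ℕ∞) ≤ η 1}, ∀ j : ℕ, 1 ≤ j →
      φ^[p] (xb 1 i (j + p)) = xb 1 i j := by
    intro p i hi j hj
    have hmem : xb 1 i (j+p) ∈ (φ^[p]) ⁻¹' {xb 1 i j} := by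
      rw [hfbp p i hi j hj]; exact rfl
    exact hmem
  have hfc : φ ⁻¹' {xc 1} = {xc 1} ∪ ⋃ i ∈ {i : ℕ | 1 ≤ i ∧ (i : ℕ∞) ≤ η 1}, {xb 1 i 1} := by
    ext x
    simp only [Set.mem_preimage, Set.mem_singleton_iff, Set.mem_union, Set.mem_iUnion,
      exists_prop]
    constructor
    · intro hx
      rcases hclass x with rfl | ⟨i', j', hi', hj', rfl⟩
      · left; rfl
      · obtain ⟨j'', rfl⟩ : ∃ j'', j' = j'' + 1 := ⟨j' - 1, by omega⟩
        rcases Nat.eq_zero_or_pos j'' with h0 | h0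
        · subst h0; right; exact ⟨i', hi', rfl⟩
        · rw [hφb i' hi' j'' h0] at hx
          exact absurd hx.symm (hbc i' hi' j'' h0)
    · rintro (rfl | ⟨i, hi, rfl⟩)
      · exact hc
      · exact hφb1 i hi
  -- measure recurrence at the circuit point
  have hwrec : ∀ p : ℕ, μ ((φ^[p+1]) ⁻¹' {xc 1}) =
      μ ((φ^[p]) ⁻¹' {xc 1}) +
        ∑' i : {i : ℕ | 1 ≤ i ∧ (i : ℕ∞) ≤ η 1}, μ {xb 1 (i:ℕ) (1+p)} := by
    intro p
    have h1 : (φ^[p+1]) ⁻¹' {xc 1} = ((φ^[p]) ⁻¹' {xc 1}) ∪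
        ⋃ i ∈ {i : ℕ | 1 ≤ i ∧ (i : ℕ∞) ≤ η 1}, {xb 1 i (1+p)} := by
      rw [Function.iterate_succ', Set.preimage_comp, hfc, Set.preimage_union]
      congr 1
      rw [Set.preimage_iUnion₂]
      refine Set.iUnion₂_congr fun i hi => ?_
      exact hfbp p i hi 1 le_rfl
    have hdisj : Disjoint ((φ^[p]) ⁻¹' {xc 1})
        (⋃ i ∈ {i : ℕ | 1 ≤ i ∧ (i : ℕ∞) ≤ η 1}, {xb 1 i (1+p)}) := by
      rw [Set.disjoint_left]
      intro x hxA hxB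
      simp only [Set.mem_iUnion, Set.mem_singleton_iff, exists_prop] at hxB
      obtain ⟨i, hi, rfl⟩ := hxB
      have : φ^[p] (xb 1 i (1+p)) = xb 1 i 1 := hup p i hi 1 le_rfl
      rw [Set.mem_preimage, Set.mem_singleton_iff, this] at hxA
      exact hbc i hi 1 le_rfl hxA.symm
    have hbiu : μ (⋃ i ∈ {i : ℕ | 1 ≤ i ∧ (i : ℕ∞) ≤ η 1}, {xb 1 i (1+p)}) =
        ∑' i : {i : ℕ | 1 ≤ i ∧ (i : ℕ∞) ≤ η 1}, μ {xb 1 (i:ℕ) (1+p)} := by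
      refine measure_biUnion (Set.to_countable _) ?_ (fun i hi => hmeas _)
      intro i hi i' hi' hne
      simp only [Function.onFun, Set.disjoint_left, Set.mem_singleton_iff]
      rintro x rfl h'
      exact hne (hinj₃ 1 i (1+p) 1 i' (1+p) le_rfl le_rfl hi.1 hi.2 (by omega)
        le_rfl le_rfl hi'.1 hi'.2 (by omega) h').2.1
    rw [h1, measure_union hdisj (hmeas _), hbiu]
  -- iterates of C act by composition with iterates of φ
  have hCpow : ∀ p : ℕ, ∀ f : Lp ℂ 2 μ, ∀ x : X, ((C^p) f : X → ℂ) x = f (φ^[p] x) := by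
    intro p
    induction p with
    | zero =>
        intro f x
        rw [pow_zero]
        simp [ContinuousLinearMap.one_apply]
    | succ p ih =>
        intro f x
        rw [pow_succ, ContinuousLinearMap.mul_apply, ih (C f) x,
          funext_of_ae hμpos (hC f) (φ^[p] x), Function.iterate_succ_apply']
  -- norm of C^p f as a weighted series
  have hnorm : ∀ p : ℕ, ∀ f : Lp ℂ 2 μ,
      (∑' y, (‖f y‖₊ : ENNReal)^2 * μ ((φ^[p]) ⁻¹' {y})) ≠ ⊤ ∧
      ‖(C^p) f‖^2 = (∑' y, (‖f y‖₊ : ENNReal)^2 * μ ((φ^[p]) ⁻¹' {y})).toReal := by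
    intro p f
    obtain ⟨h1, h2⟩ := lp2_norm_sq ((C^p) f)
    have he : (∫⁻ x, (‖((C^p) f) x‖₊ : ENNReal)^2 ∂μ)
        = ∑' y, (‖f y‖₊ : ENNReal)^2 * μ ((φ^[p]) ⁻¹' {y}) := by
      have e1 : ∀ x, (‖((C^p) f) x‖₊ : ENNReal)^2 = (‖f (φ^[p] x)‖₊ : ENNReal)^2 := by
        intro x; rw [hCpow p f x]
      rw [lintegral_congr e1,
        ← lintegral_map (f := fun y => (‖f y‖₊ : ENNReal)^2)
          (measurable_of_countable _) (measurable_of_countable _),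
        lintegral_countable']
      refine tsum_congr fun y => ?_
      rw [Measure.map_apply (measurable_of_countable _) (hmeas _)]
    exact ⟨by rw [← he]; exact h1, by rw [h2, he]⟩
  -- point-mass test functions
  have hkey : ∀ y : X, ∃ g : Lp ℂ 2 μ, ∀ p : ℕ,
      μ ((φ^[p]) ⁻¹' {y}) ≠ ⊤ ∧ ‖(C^p) g‖^2 = (μ ((φ^[p]) ⁻¹' {y})).toReal := by
    intro y
    have hcoe : ∀ x, ((indicatorConstLp 2 (hmeas {y}) (hμfin y) (1:ℂ)) : X → ℂ) x =
        Set.indicator {y} (fun _ => (1:ℂ)) x :=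
      funext_of_ae hμpos indicatorConstLp_coeFn
    refine ⟨indicatorConstLp 2 (hmeas {y}) (hμfin y) (1:ℂ), fun p => ?_⟩
    have hsum : (∑' y', (‖(indicatorConstLp 2 (hmeas {y}) (hμfin y) (1:ℂ)) y'‖₊ : ENNReal)^2 *
        μ ((φ^[p]) ⁻¹' {y'})) = μ ((φ^[p]) ⁻¹' {y}) := by
      rw [tsum_eq_single y ?_]
      · rw [hcoe y, Set.indicator_of_mem (Set.mem_singleton y)]
        simp
      · intro y' hy'
        rw [hcoe y', Set.indicator_of_notMem (by simp [hy'])]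
        simp
    obtain ⟨h1, h2⟩ := hnorm p (indicatorConstLp 2 (hmeas {y}) (hμfin y) (1:ℂ))
    rw [hsum] at h1 h2
    exact ⟨h1, h2⟩
  have hwfin : ∀ p : ℕ, ∀ y : X, μ ((φ^[p]) ⁻¹' {y}) ≠ ⊤ :=
    fun p y => ((hkey y).choose_spec p).1
  -- branch values
  have hγpos : ∀ i t : ℕ, 0 < (μ {xb 1 i (k + t + 1)}).toReal :=
    fun i t => ENNReal.toReal_pos (hμpos _).ne' (hμfin _)
  have hvb : ∀ i ∈ {i : ℕ | 1 ≤ i ∧ (i : ℕ∞) ≤ η 1}, ∀ j : ℕ, 1 ≤ j →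
      (fun t => (μ ((φ^[t + k]) ⁻¹' {xb 1 i j})).toReal)
        = fun t => (μ {xb 1 i (k + (t + (j-1)) + 1)}).toReal := by
    intro i hi j hj
    funext t
    rw [hfbp (t+k) i hi j hj, show j + (t+k) = k + (t + (j-1)) + 1 by omega]
  -- summability of the branch series
  have hSfin : ∀ p : ℕ, 1 ≤ p →
      (∑' i : {i : ℕ | 1 ≤ i ∧ (i : ℕ∞) ≤ η 1}, μ {xb 1 (i:ℕ) p}) ≠ ⊤ := by
    intro p hp
    have h1 := hwrec (p-1)
    have hp1 : (p-1)+1 = p := by omega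
    have hp2 : 1+(p-1) = p := by omega
    rw [hp1, hp2] at h1
    have hfin := hwfin p (xc 1)
    rw [h1] at hfin
    intro htop
    rw [htop, add_top] at hfin
    exact hfin rfl
  have hsummS : ∀ t : ℕ, Summable (fun i : {i : ℕ | 1 ≤ i ∧ (i : ℕ∞) ≤ η 1} =>
      (μ {xb 1 (i:ℕ) (k + t + 1)}).toReal) := by
    intro t
    exact ENNReal.summable_toReal (hSfin (k+t+1) (by omega))
  -- the finite-difference recurrence at the circuit point
  have hVrec : Δ (fun t => (μ ((φ^[t + k]) ⁻¹' {xc 1})).toReal)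
      = fun t => ∑' i : {i : ℕ | 1 ≤ i ∧ (i : ℕ∞) ≤ η 1},
          (μ {xb 1 (i:ℕ) (k + t + 1)}).toReal := by
    funext t
    show (μ ((φ^[(t+1) + k]) ⁻¹' {xc 1})).toReal - (μ ((φ^[t + k]) ⁻¹' {xc 1})).toReal = _
    have h1 := hwrec (t+k)
    have h2 : 1+(t+k) = k+t+1 := by omega
    rw [h2] at h1
    have h3 : (t+1)+k = (t+k)+1 := by omega
    rw [h3, h1, ENNReal.toReal_add (hwfin _ (xc 1)) (hSfin (k+t+1) (by omega)),
      ENNReal.tsum_toReal_eq (fun i => hμfin _)]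
    ring
  -- pointwise vanishing of the m-th difference
  have hpoint : ∀ y : X, Δ^[m] (fun t => (μ ((φ^[t + k]) ⁻¹' {y})).toReal) 0 = 0 := by
    intro y
    rcases hclass y with rfl | ⟨i, j, hi, hj, rfl⟩
    · rw [show m = ((m-2)+1)+1 by omega, Function.iterate_succ_apply, hVrec,
        fwdDiff_iter_tsum (fun (i : {i : ℕ | 1 ≤ i ∧ (i:ℕ∞) ≤ η 1}) (t : ℕ) =>
          (μ {xb 1 (i:ℕ) (k+t+1)}).toReal) ((m-2)+1) hsummS]
      have hz : ∀ i : {i : ℕ | 1 ≤ i ∧ (i:ℕ∞) ≤ η 1},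
          Δ^[(m-2)+1] (fun t : ℕ => (μ {xb 1 (i:ℕ) (k+t+1)}).toReal) 0 = 0 := by
        intro i
        obtain ⟨q, hqd, hqe⟩ := hall i.1 i.2.1 i.2.2
        have hγq : (fun t : ℕ => (μ {xb 1 (i:ℕ) (k+t+1)}).toReal)
            = fun t : ℕ => q.eval (t:ℝ) := funext fun t => (hqe t).symm
        rw [hγq]
        exact fwdDiff_iter_poly_zero (m-2) q hqd 0
      rw [tsum_congr hz, tsum_zero]
    · rw [hvb i hi j hj]
      obtain ⟨q, hqd, hqe⟩ := hall i hi.1 hi.2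
      have hγq : (fun u : ℕ => (μ {xb 1 i (k+u+1)}).toReal)
          = fun u : ℕ => q.eval (u:ℝ) := funext fun u => (hqe u).symm
      have hshift : (fun t => (μ {xb 1 i (k + (t + (j-1)) + 1)}).toReal)
          = fun t => (fun u : ℕ => (μ {xb 1 i (k+u+1)}).toReal) (t + (j-1)) := rfl
      rw [hshift, fwdDiff_iter_shift (fun u : ℕ => (μ {xb 1 i (k+u+1)}).toReal) (j-1) m 0, hγq]
      exact fwdDiff_iter_eq_zero_of_le _ ((m-2)+1)
        (fwdDiff_iter_poly_zero (m-2) q hqd) (by omega) _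
  constructor
  · rw [isQuasiIso_iff]
    intro f
    have hsumm : ∀ p, Summable (fun y => ‖f y‖^2 * (μ ((φ^[p]) ⁻¹' {y})).toReal) := by
      intro p
      refine Summable.congr (ENNReal.summable_toReal (hnorm p f).1) (fun y => ?_)
      rw [ENNReal.toReal_mul, ENNReal.toReal_pow, ENNReal.coe_toReal, coe_nnnorm]
    have hterm : ∀ j ∈ range (m+1), ((-1:ℝ)^j * (m.choose j:ℝ)) * ‖(C ^ ((m - j) + k)) f‖^2
        = ∑' y, ((-1:ℝ)^j * (m.choose j:ℝ)) *
            (‖f y‖^2 * (μ ((φ^[(m-j)+k]) ⁻¹' {y})).toReal) := by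
      intro j hj
      rw [(hnorm ((m-j)+k) f).2,
        ENNReal.tsum_toReal_eq (fun y => ENNReal.mul_ne_top
          (ENNReal.pow_ne_top ENNReal.coe_ne_top) (hwfin _ y)),
        tsum_congr (fun y => by
          rw [ENNReal.toReal_mul, ENNReal.toReal_pow, ENNReal.coe_toReal, coe_nnnorm]),
        ← tsum_mul_left]
    rw [Finset.sum_congr rfl hterm,
      ← Summable.tsum_finsetSum (fun j hj => ((hsumm ((m-j)+k)).mul_left _))]
    have hzero : ∀ y : X, (∑ j ∈ range (m+1),
        ((-1:ℝ)^j * (m.choose j:ℝ)) *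
          (‖f y‖^2 * (μ ((φ^[(m-j)+k]) ⁻¹' {y})).toReal)) = 0 := by
      intro y
      have h1 : ∀ j ∈ range (m+1), ((-1:ℝ)^j * (m.choose j:ℝ)) *
          (‖f y‖^2 * (μ ((φ^[(m-j)+k]) ⁻¹' {y})).toReal)
          = ‖f y‖^2 * (((-1:ℝ)^j * (m.choose j:ℝ)) *
            (fun t => (μ ((φ^[t + k]) ⁻¹' {y})).toReal) (m - j)) := by
        intro j hj; simp only; ring
      rw [Finset.sum_congr rfl h1, ← Finset.mul_sum,
        sum_alt_eq_fwdDiff₀ (fun t => (μ ((φ^[t + k]) ⁻¹' {y})).toReal) m, hpoint y, mul_zero]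
    rw [tsum_congr hzero, tsum_zero]
  · intro n hn1 hnm hqi
    rw [isQuasiIso_iff] at hqi
    obtain ⟨i₀, hi01, hi02, q, hqdeg, hqe⟩ := hex
    have hi0S : i₀ ∈ {i : ℕ | 1 ≤ i ∧ (i : ℕ∞) ≤ η 1} := ⟨hi01, hi02⟩
    have hqnd : q.natDegree = m - 2 := Polynomial.natDegree_eq_of_degree_eq_some hqdeg
    have hqpos : ∀ j : ℕ, 0 < q.eval (j:ℝ) := fun j => by rw [hqe j]; exact hγpos i₀ j
    rcases (by omega : n ≤ m - 2 ∨ n = (m-2) + 1) with hnd | hnd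
    · have hnz : ¬ ∀ y, Δ^[n] (fun t : ℕ => (μ {xb 1 i₀ (k+t+1)}).toReal) y = 0 := by
        intro hzero
        have hN := eval_newtonPoly _ n hzero
        have hqN : q = newtonPoly (fun t : ℕ => (μ {xb 1 i₀ (k+t+1)}).toReal) n :=
          poly_eq_of_eval_nat (fun j => by rw [hqe j, hN j])
        have hle := natDegree_newtonPoly (fun t : ℕ => (μ {xb 1 i₀ (k+t+1)}).toReal) n
        rw [← hqN] at hle
        omega
      push_neg at hnz
      obtain ⟨j₀, hj₀⟩ := hnz
      obtain ⟨g, hg⟩ := hkey (xb 1 i₀ (j₀+1))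
      have h0 := hqi g
      have h1 : ∑ j ∈ range (n+1), ((-1:ℝ)^j * (n.choose j:ℝ)) * ‖(C ^ ((n - j) + k)) g‖^2
          = Δ^[n] (fun t => (μ ((φ^[t + k]) ⁻¹' {xb 1 i₀ (j₀+1)})).toReal) 0 := by
        rw [← sum_alt_eq_fwdDiff₀]
        exact Finset.sum_congr rfl fun j hj => by rw [(hg ((n-j)+k)).2]
      rw [h1, hvb i₀ hi0S (j₀+1) (by omega)] at h0
      have h2 : (fun t => (μ {xb 1 i₀ (k + (t + ((j₀+1)-1)) + 1)}).toReal)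
          = fun t => (fun u : ℕ => (μ {xb 1 i₀ (k+u+1)}).toReal) (t + j₀) := rfl
      rw [h2, fwdDiff_iter_shift (fun u : ℕ => (μ {xb 1 i₀ (k+u+1)}).toReal) j₀ n 0,
        Nat.zero_add] at h0
      exact hj₀ h0
    · obtain ⟨g, hg⟩ := hkey (xc 1)
      have h0 := hqi g
      have h1 : ∑ j ∈ range (n+1), ((-1:ℝ)^j * (n.choose j:ℝ)) * ‖(C ^ ((n - j) + k)) g‖^2
          = Δ^[n] (fun t => (μ ((φ^[t + k]) ⁻¹' {xc 1})).toReal) 0 := by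
        rw [← sum_alt_eq_fwdDiff₀]
        exact Finset.sum_congr rfl fun j hj => by rw [(hg ((n-j)+k)).2]
      rw [h1, hnd, Function.iterate_succ_apply, hVrec,
        fwdDiff_iter_tsum (fun (i : {i : ℕ | 1 ≤ i ∧ (i:ℕ∞) ≤ η 1}) (t : ℕ) =>
          (μ {xb 1 (i:ℕ) (k+t+1)}).toReal) (m-2) hsummS] at h0
      have hpos : 0 < ∑' i : {i : ℕ | 1 ≤ i ∧ (i:ℕ∞) ≤ η 1},
          Δ^[m-2] (fun t : ℕ => (μ {xb 1 (i:ℕ) (k+t+1)}).toReal) 0 := by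
        refine Summable.tsum_pos (summable_fwdDiff_iter
          (fun (i : {i : ℕ | 1 ≤ i ∧ (i:ℕ∞) ≤ η 1}) (t : ℕ) =>
            (μ {xb 1 (i:ℕ) (k+t+1)}).toReal) (m-2) hsummS) (fun i => ?_) ⟨i₀, hi0S⟩ ?_
        · obtain ⟨q', hq'd, hq'e⟩ := hall i.1 i.2.1 i.2.2
          rw [fwdDiff_iter_poly_coeff q' (m-2) hq'd _ (fun j => hq'e j) 0]
          refine mul_nonneg (by positivity) ?_
          exact coeff_nonneg_of_pos_eval q' (m-2) hq'd
            (fun j => by rw [hq'e j]; exact hγpos i.1 j)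
        · rw [fwdDiff_iter_poly_coeff q (m-2) (le_of_eq hqnd) _ (fun j => hqe j) 0]
          refine mul_pos ?_ (coeff_pos_of_pos_eval q (m-2) hqdeg hqpos)
          exact_mod_cast Nat.cast_pos.mpr (Nat.factorial_pos (m-2))
      exact hpos.ne' h0
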